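/- arXiv:2002.01992 — 4 statements merged into one kernel-verified Lean document; each statement's English description precedes it below -/
import Mathlib

section
/- Let $X \in \mathbb{C}^{m\times n}$, let $P \in \mathbb{C}^{m\times m}$ and $Q \in \mathbb{C}^{n\times n}$ be orthogonal projections, i.e. $P^* = P$, $P^2 = P$, $Q^* = Q$, $Q^2 = Q$. Then $\|X - P X Q\|_F^2 \le \|X - P X\|_F^2 + \|X - X Q\|_F^2$. -/
open scoped BigOperators
open Matrix

/-- Squared Frobenius norm of a complex matrix. -/
noncomputable def frobSq {m n : Type*} [Fintype m] [Fintype n] (M : Matrix m n ℂ) : ℝ :=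
  ∑ i, ∑ j, ‖M i j‖ ^ 2

lemma frobSq_nonneg {m n : Type*} [Fintype m] [Fintype n] (M : Matrix m n ℂ) :
    0 ≤ frobSq M := by
  unfold frobSq
  positivity

lemma frobSq_pyth {m n : Type*} [Fintype m] [Fintype n] (A B : Matrix m n ℂ)
    (h : Aᴴ * B = 0) : frobSq (A + B) = frobSq A + frobSq B := by
  have key' : (∑ i, ∑ j, ((starRingEnd ℂ) (A i j) * B i j)).re = 0 := by
    have h2 : Matrix.trace (Aᴴ * B) = 0 := by rw [h]; simp
    simp only [Matrix.trace, Matrix.diag, Matrix.mul_apply,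
      Matrix.conjTranspose_apply, RCLike.star_def] at h2
    rw [Finset.sum_comm, h2]
    simp
  have expand : ∀ (a b : ℂ), ‖a + b‖ ^ 2 = ‖a‖ ^ 2 + ‖b‖ ^ 2 + 2 * ((starRingEnd ℂ) a * b).re := by
    intro a b
    have hc : ((starRingEnd ℂ) a * b).re = (a * (starRingEnd ℂ) b).re := by
      rw [show (starRingEnd ℂ) a * b = (starRingEnd ℂ) (a * (starRingEnd ℂ) b) by
        simp [_root_.map_mul, mul_comm], Complex.conj_re]
    rw [hc]
    have := Complex.normSq_add a b
    simpa only [← Complex.sq_norm] using this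
  unfold frobSq
  simp only [Matrix.add_apply, expand, Finset.sum_add_distrib, ← Finset.mul_sum,
    ← Complex.re_sum, key']
  ring

lemma frobSq_proj_le {m n : Type*} [Fintype m] [Fintype n] [DecidableEq m]
    (P : Matrix m m ℂ) (C : Matrix m n ℂ)
    (hPstar : Pᴴ = P) (hPidem : P * P = P) : frobSq (P * C) ≤ frobSq C := by
  have horth : (P * C)ᴴ * (C - P * C) = 0 := by
    simp only [Matrix.conjTranspose_mul, hPstar, Matrix.mul_sub, Matrix.mul_assoc]
    rw [show P * (P * C) = P * C by rw [← Matrix.mul_assoc, hPidem], sub_self]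
  have hsum : P * C + (C - P * C) = C := by abel
  have := frobSq_pyth (P * C) (C - P * C) horth
  rw [hsum] at this
  have hn := frobSq_nonneg (C - P * C)
  linarith

/-- For `X ∈ ℂ^{m×n}` and orthogonal projections `P ∈ ℂ^{m×m}`, `Q ∈ ℂ^{n×n}`,
`‖X - P X Q‖_F² ≤ ‖X - P X‖_F² + ‖X - X Q‖_F²`. -/
theorem hybrid_projection_lemma_matrix_case {m n : ℕ}
    (X : Matrix (Fin m) (Fin n) ℂ)
    (P : Matrix (Fin m) (Fin m) ℂ) (Q : Matrix (Fin n) (Fin n) ℂ)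
    (hPstar : Pᴴ = P) (hPidem : P * P = P)
    (hQstar : Qᴴ = Q) (hQidem : Q * Q = Q) :
    frobSq (X - P * X * Q) ≤ frobSq (X - P * X) + frobSq (X - X * Q) := by
  set A := X - P * X with hA
  set B := P * (X - X * Q) with hB
  have hAB : A + B = X - P * X * Q := by
    rw [hA, hB, Matrix.mul_sub, Matrix.mul_assoc]
    abel
  have horth : Aᴴ * B = 0 := by
    rw [hA, hB]
    simp only [Matrix.conjTranspose_sub, Matrix.conjTranspose_mul, hPstar, Matrix.sub_mul,
      Matrix.mul_assoc]
    rw [show P * (P * (X - X * Q)) = P * (X - X * Q) by rw [← Matrix.mul_assoc, hPidem],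
      sub_self]
  rw [← hAB, frobSq_pyth A B horth]
  have hle : frobSq B ≤ frobSq (X - X * Q) := frobSq_proj_le P _ hPstar hPidem
  linarith
end

section
/- Let $X \in \mathbb{C}^{n_1 \times (n_3 n_2)}$ be a matrix whose columns are indexed by pairs $(i_3, i_2) \in \{1,\dots,n_3\} \times \{1,\dots,n_2\}$ (the mode-1 unfolding of an $n_1 \times n_2 \times n_3$ tensor), and let $\Pi_1 \in \mathbb{C}^{n_1\times n_1}$, $\Pi_2 \in \mathbb{C}^{n_2\times n_2}$, $\Pi_3 \in \mathbb{C}^{n_3\times n_3}$ be orthogonal projections ($\Pi_j^* = \Pi_j$, $\Pi_j^2 = \Pi_j$). Then $\|X - \Pi_1 X (\Pi_3 \otimes \Pi_2)^*\|_F^2 \le \|X - \Pi_1 X\|_F^2 + \|X - X (I_{n_3} \otimes \Pi_2)^*\|_F^2 + \|X - X (\Pi_3 \otimes I_{n_2})^*\|_F^2$. -/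
open scoped BigOperators Kronecker
open Matrix

namespace HybridAux

variable {m n : Type*} [Fintype m] [Fintype n] [DecidableEq m] [DecidableEq n]

/-- Frobenius inner product. -/
noncomputable def fip (A B : Matrix m n ℂ) : ℂ := Matrix.trace (Aᴴ * B)

lemma frobSq_eq_re_fip (M : Matrix m n ℂ) : frobSq M = (fip M M).re := by
  simp only [fip, Matrix.trace, Matrix.diag, Matrix.mul_apply, Matrix.conjTranspose_apply,
    frobSq, Complex.re_sum]
  rw [Finset.sum_comm]
  refine Finset.sum_congr rfl fun i _ => Finset.sum_congr rfl fun j _ => ?_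
  rw [show (star (M j i) * M j i) = ((Complex.normSq (M j i) : ℝ) : ℂ) from
    Complex.normSq_eq_conj_mul_self.symm]
  simp [Complex.sq_norm]

lemma fip_conj (A B : Matrix m n ℂ) : fip B A = star (fip A B) := by
  rw [fip, fip, ← Matrix.trace_conjTranspose, Matrix.conjTranspose_mul,
    Matrix.conjTranspose_conjTranspose]

lemma frobSq_nonneg (M : Matrix m n ℂ) : 0 ≤ frobSq M := by
  refine Finset.sum_nonneg fun i _ => Finset.sum_nonneg fun j _ => ?_
  positivity

lemma pythag {A B : Matrix m n ℂ} (h : fip A B = 0) :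
    frobSq (A + B) = frobSq A + frobSq B := by
  rw [frobSq_eq_re_fip, frobSq_eq_re_fip, frobSq_eq_re_fip]
  have expand : fip (A + B) (A + B) = fip A A + fip A B + fip B A + fip B B := by
    simp [fip, Matrix.conjTranspose_add, Matrix.add_mul, Matrix.mul_add]
    ring
  rw [expand, h, fip_conj A B, h]
  simp

lemma left_contract (P : Matrix m m ℂ) (hs : Pᴴ = P) (hi : P * P = P)
    (M : Matrix m n ℂ) : frobSq (P * M) ≤ frobSq M := by
  have hzero : (1 - P) * P = 0 := by rw [Matrix.sub_mul, Matrix.one_mul, hi, sub_self]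
  have horth : fip (P * M) ((1 - P) * M) = 0 := by
    have : (P * M)ᴴ * ((1 - P) * M) = Mᴴ * (((1 - P) * P)ᴴ * M) := by
      rw [Matrix.conjTranspose_mul, Matrix.conjTranspose_mul, Matrix.conjTranspose_sub,
        Matrix.conjTranspose_one, hs]
      simp [Matrix.mul_assoc, Matrix.mul_sub, Matrix.sub_mul]
    rw [fip, this, hzero]
    simp
  have hsum : M = P * M + (1 - P) * M := by
    rw [Matrix.sub_mul, Matrix.one_mul]; abel
  calc frobSq (P * M) ≤ frobSq (P * M) + frobSq ((1 - P) * M) := by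
        have := frobSq_nonneg ((1 - P) * M); linarith
    _ = frobSq M := by rw [← pythag horth, ← hsum]

lemma right_contract (Q : Matrix n n ℂ) (hs : Qᴴ = Q) (hi : Q * Q = Q)
    (M : Matrix m n ℂ) : frobSq (M * Q) ≤ frobSq M := by
  have hzero : (1 - Q) * Q = 0 := by rw [Matrix.sub_mul, Matrix.one_mul, hi, sub_self]
  have horth : fip (M * Q) (M * (1 - Q)) = 0 := by
    rw [fip, Matrix.conjTranspose_mul, hs]
    have : Q * Mᴴ * (M * (1 - Q)) = Q * (Mᴴ * M * (1 - Q)) := by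
      simp [Matrix.mul_assoc]
    rw [this, Matrix.trace_mul_comm]
    have : Mᴴ * M * (1 - Q) * Q = Mᴴ * M * ((1 - Q) * Q) := by simp [Matrix.mul_assoc]
    rw [this, hzero]
    simp
  have hsum : M = M * Q + M * (1 - Q) := by
    rw [Matrix.mul_sub, Matrix.mul_one]; abel
  calc frobSq (M * Q) ≤ frobSq (M * Q) + frobSq (M * (1 - Q)) := by
        have := frobSq_nonneg (M * (1 - Q)); linarith
    _ = frobSq M := by rw [← pythag horth, ← hsum]

lemma kron_conjTranspose {l p : Type*} [Fintype l] [Fintype p]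
    (A : Matrix l l ℂ) (B : Matrix p p ℂ) : (A ⊗ₖ B)ᴴ = Aᴴ ⊗ₖ Bᴴ := by
  ext ⟨i, j⟩ ⟨k, l⟩
  simp [Matrix.conjTranspose_apply, star_mul']

end HybridAux

open HybridAux

/-- Order-3 projection lemma, expressed via the mode-1 unfolding
`X ∈ ℂ^{n₁ × (n₃ n₂)}`:
`‖X - Π₁ X (Π₃ ⊗ Π₂)^*‖_F² ≤ ‖X - Π₁ X‖_F² + ‖X - X (I ⊗ Π₂)^*‖_F² + ‖X - X (Π₃ ⊗ I)^*‖_F²`. -/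
theorem hybrid_projection_lemma_order3 {n1 n2 n3 : ℕ}
    (X : Matrix (Fin n1) (Fin n3 × Fin n2) ℂ)
    (Pi1 : Matrix (Fin n1) (Fin n1) ℂ)
    (Pi2 : Matrix (Fin n2) (Fin n2) ℂ)
    (Pi3 : Matrix (Fin n3) (Fin n3) ℂ)
    (hP1star : Pi1ᴴ = Pi1) (hP1idem : Pi1 * Pi1 = Pi1)
    (hP2star : Pi2ᴴ = Pi2) (hP2idem : Pi2 * Pi2 = Pi2)
    (hP3star : Pi3ᴴ = Pi3) (hP3idem : Pi3 * Pi3 = Pi3) :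
    frobSq (X - Pi1 * X * (Pi3 ⊗ₖ Pi2)ᴴ) ≤
      frobSq (X - Pi1 * X)
      + frobSq (X - X * ((1 : Matrix (Fin n3) (Fin n3) ℂ) ⊗ₖ Pi2)ᴴ)
      + frobSq (X - X * (Pi3 ⊗ₖ (1 : Matrix (Fin n2) (Fin n2) ℂ))ᴴ) := by
  set L2 : Matrix (Fin n3 × Fin n2) (Fin n3 × Fin n2) ℂ := (1 : Matrix (Fin n3) (Fin n3) ℂ) ⊗ₖ Pi2 with hL2
  set L3 : Matrix (Fin n3 × Fin n2) (Fin n3 × Fin n2) ℂ := Pi3 ⊗ₖ (1 : Matrix (Fin n2) (Fin n2) ℂ) with hL3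
  -- Hermitian and idempotent properties
  have hL2s : L2ᴴ = L2 := by rw [hL2, kron_conjTranspose, Matrix.conjTranspose_one, hP2star]
  have hL3s : L3ᴴ = L3 := by rw [hL3, kron_conjTranspose, Matrix.conjTranspose_one, hP3star]
  have hL2i : L2 * L2 = L2 := by
    rw [hL2, ← Matrix.mul_kronecker_mul, Matrix.one_mul, hP2idem]
  have hL3i : L3 * L3 = L3 := by
    rw [hL3, ← Matrix.mul_kronecker_mul, Matrix.one_mul, hP3idem]
  have hKs : (Pi3 ⊗ₖ Pi2)ᴴ = L3 * L2 := by
    rw [kron_conjTranspose, hP3star, hP2star, hL3, hL2, ← Matrix.mul_kronecker_mul,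
      Matrix.mul_one, Matrix.one_mul]
  -- the three orthogonal pieces
  set A : Matrix (Fin n1) (Fin n3 × Fin n2) ℂ := (1 - Pi1) * X with hA
  set B : Matrix (Fin n1) (Fin n3 × Fin n2) ℂ := Pi1 * (X - X * L2) with hB
  set C : Matrix (Fin n1) (Fin n3 × Fin n2) ℂ := Pi1 * ((X - X * L3) * L2) with hC
  have hdecomp : X - Pi1 * X * (Pi3 ⊗ₖ Pi2)ᴴ = A + (B + C) := by
    rw [hKs, hA, hB, hC]
    simp only [Matrix.sub_mul, Matrix.mul_sub, Matrix.one_mul, Matrix.mul_one,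
      ← Matrix.mul_assoc]
    abel
  -- orthogonality: A ⟂ B, A ⟂ C, B ⟂ C
  have hP1perp : (1 - Pi1)ᴴ * Pi1 = 0 := by
    rw [Matrix.conjTranspose_sub, Matrix.conjTranspose_one, hP1star, Matrix.sub_mul,
      Matrix.one_mul, hP1idem, sub_self]
  have hfipA : ∀ Y : Matrix (Fin n1) (Fin n3 × Fin n2) ℂ, fip A (Pi1 * Y) = 0 := by
    intro Y
    rw [fip, hA, Matrix.conjTranspose_mul]
    have : Xᴴ * (1 - Pi1)ᴴ * (Pi1 * Y) = Xᴴ * (((1 - Pi1)ᴴ * Pi1) * Y) := by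
      simp [Matrix.mul_assoc]
    rw [this, hP1perp]
    simp
  have hAB : fip A B = 0 := hfipA _
  have hAC : fip A C = 0 := hfipA _
  have hBC : fip B C = 0 := by
    rw [fip, hB, hC, Matrix.conjTranspose_mul, hP1star]
    have h1 : (X - X * L2)ᴴ * Pi1 * (Pi1 * ((X - X * L3) * L2)) =
        ((X - X * L2)ᴴ * (Pi1 * (X - X * L3))) * L2 := by
      rw [Matrix.mul_assoc ((X - X * L2)ᴴ) Pi1, ← Matrix.mul_assoc Pi1 Pi1, hP1idem]
      simp [Matrix.mul_assoc]
    rw [h1, Matrix.trace_mul_comm]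
    have h2 : L2 * (X - X * L2)ᴴ = 0 := by
      rw [Matrix.conjTranspose_sub, Matrix.conjTranspose_mul, hL2s, Matrix.mul_sub,
        ← Matrix.mul_assoc, hL2i, sub_self]
    rw [← Matrix.mul_assoc, h2]
    simp
  have hABC : fip A (B + C) = 0 := by
    have : fip A (B + C) = fip A B + fip A C := by
      simp [fip, Matrix.mul_add]
    rw [this, hAB, hAC, add_zero]
  -- Pythagoras
  have hpyth : frobSq (X - Pi1 * X * (Pi3 ⊗ₖ Pi2)ᴴ) = frobSq A + (frobSq B + frobSq C) := by
    rw [hdecomp, pythag hABC, pythag hBC]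
  rw [hpyth]
  -- bound each term
  have hAeq : frobSq A = frobSq (X - Pi1 * X) := by
    rw [hA, Matrix.sub_mul, Matrix.one_mul]
  have hBle : frobSq B ≤ frobSq (X - X * L2ᴴ) := by
    rw [hL2s]
    exact left_contract Pi1 hP1star hP1idem _
  have hCle : frobSq C ≤ frobSq (X - X * L3ᴴ) := by
    rw [hL3s]
    calc frobSq C ≤ frobSq ((X - X * L3) * L2) := left_contract Pi1 hP1star hP1idem _
      _ ≤ frobSq (X - X * L3) := right_contract L2 hL2s hL2i _
  rw [hAeq]
  linarith
end

section
/- Let $A \in \mathbb{C}^{m\times n}$ and suppose $A P = Q R$ where $P \in \mathbb{C}^{n\times n}$ is a permutation matrix, $Q = [Q_1\ Q_2] \in \mathbb{C}^{m\times m}$ is unitary with $Q_1 \in \mathbb{C}^{m\times k}$, and $R = \begin{pmatrix} R_{11} & R_{12} \\ 0 & R_{22} \end{pmatrix} \in \mathbb{C}^{m\times n}$ is upper triangular with $R_{11} \in \mathbb{C}^{k\times k}$ invertible. Set $C = Q_1 R_{11}$, which has full column rank, and $C^+ = (C^* C)^{-1} C^*$. Then $\|(I_m - C C^+) A\|_F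 \le \|R_{22}\|_F$. -/
open scoped BigOperators
open Matrix

/-- Frobenius norm of a complex matrix. -/
noncomputable def frobNorm {m n : Type*} [Fintype m] [Fintype n] (M : Matrix m n ℂ) : ℝ :=
  Real.sqrt (frobSq M)

lemma frobSq_eq_re_trace {p q : ℕ} (M : Matrix (Fin p) (Fin q) ℂ) :
    frobSq M = (Matrix.trace (Mᴴ * M)).re := by
  have hz : ∀ z : ℂ, ((starRingEnd ℂ) z * z).re = ‖z‖ ^ 2 := by
    intro z
    rw [mul_comm, Complex.mul_conj, Complex.ofReal_re, Complex.normSq_eq_norm_sq]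
  unfold frobSq
  rw [Matrix.trace, Complex.re_sum]
  rw [Finset.sum_comm]
  refine Finset.sum_congr rfl fun j _ => ?_
  simp only [Matrix.diag_apply, Matrix.mul_apply, Matrix.conjTranspose_apply, Complex.re_sum]
  exact Finset.sum_congr rfl fun i _ => (hz _).symm

lemma frobSq_unitary_left {p q : ℕ} (Q : Matrix (Fin p) (Fin p) ℂ) (hQ : Qᴴ * Q = 1)
    (M : Matrix (Fin p) (Fin q) ℂ) : frobSq (Q * M) = frobSq M := by
  rw [frobSq_eq_re_trace, frobSq_eq_re_trace]
  congr 2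
  rw [Matrix.conjTranspose_mul, Matrix.mul_assoc, ← Matrix.mul_assoc Qᴴ, hQ, Matrix.one_mul]

lemma frobSq_submatrix_col {p q : ℕ} (M : Matrix (Fin p) (Fin q) ℂ) (e : Equiv.Perm (Fin q)) :
    frobSq (M.submatrix id e) = frobSq M := by
  unfold frobSq
  refine Finset.sum_congr rfl fun i _ => ?_
  simpa using Equiv.sum_comp e (fun j => ‖M i j‖ ^ 2)

/-- Given a pivoted QR factorization `A P = Q R` with `Q = [Q₁ Q₂]` unitary,
`R = [[R₁₁, R₁₂], [0, R₂₂]]` upper triangular with `R₁₁` invertible, and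
`C = Q₁ R₁₁` (full column rank, `C⁺ = (C^*C)⁻¹C^*`), one has
`‖(I - C C⁺) A‖_F ≤ ‖R₂₂‖_F`. -/
theorem pivoted_qr_column_projection_bound {m n k : ℕ} (hkm : k ≤ m) (hkn : k ≤ n)
    (A : Matrix (Fin m) (Fin n) ℂ)
    (P : Matrix (Fin n) (Fin n) ℂ)
    (hP : ∃ e : Equiv.Perm (Fin n), P = e.permMatrix ℂ)
    (Q : Matrix (Fin m) (Fin m) ℂ)
    (hQ : Qᴴ * Q = 1) (hQ' : Q * Qᴴ = 1)
    (R : Matrix (Fin m) (Fin n) ℂ)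
    (hR : ∀ (i : Fin m) (j : Fin n), (j : ℕ) < (i : ℕ) → R i j = 0)
    (hQR : A * P = Q * R)
    (Q1 : Matrix (Fin m) (Fin k) ℂ)
    (hQ1 : ∀ (i : Fin m) (j : Fin k), Q1 i j = Q i (Fin.castLE hkm j))
    (R11 : Matrix (Fin k) (Fin k) ℂ)
    (hR11 : ∀ i j : Fin k, R11 i j = R (Fin.castLE hkm i) (Fin.castLE hkn j))
    (R22 : Matrix (Fin (m - k)) (Fin (n - k)) ℂ)
    (hR22 : ∀ (i : Fin (m - k)) (j : Fin (n - k)),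
      R22 i j = R ⟨k + (i : ℕ), by omega⟩ ⟨k + (j : ℕ), by omega⟩)
    (hR11inv : IsUnit R11)
    (C : Matrix (Fin m) (Fin k) ℂ) (hC : C = Q1 * R11) :
    frobNorm ((1 - C * ((Cᴴ * C)⁻¹ * Cᴴ)) * A) ≤ frobNorm R22 := by
  obtain ⟨e, rfl⟩ := hP
  -- Q1ᴴ * Q1 = 1
  have hQ1Q1 : Q1ᴴ * Q1 = 1 := by
    ext a b
    have h := congrFun (congrFun hQ (Fin.castLE hkm a)) (Fin.castLE hkm b)
    simp only [Matrix.mul_apply, Matrix.conjTranspose_apply, Matrix.one_apply] at h ⊢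
    simp only [hQ1]
    rw [h]
    simp [Fin.castLE_inj]
  -- projector equals Q1 * Q1ᴴ
  have hdet : IsUnit R11.det := (Matrix.isUnit_iff_isUnit_det R11).mp hR11inv
  have hdetH : IsUnit (R11ᴴ).det := by
    rw [Matrix.det_conjTranspose]; exact hdet.star
  have hproj : C * ((Cᴴ * C)⁻¹ * Cᴴ) = Q1 * Q1ᴴ := by
    have hCC : Cᴴ * C = R11ᴴ * R11 := by
      rw [hC, Matrix.conjTranspose_mul, Matrix.mul_assoc, ← Matrix.mul_assoc Q1ᴴ, hQ1Q1,
        Matrix.one_mul]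
    rw [hCC, Matrix.mul_inv_rev, hC, Matrix.conjTranspose_mul]
    calc Q1 * R11 * (R11⁻¹ * R11ᴴ⁻¹ * (R11ᴴ * Q1ᴴ))
        = Q1 * ((R11 * R11⁻¹) * ((R11ᴴ⁻¹ * R11ᴴ) * Q1ᴴ)) := by
          simp only [Matrix.mul_assoc]
      _ = Q1 * Q1ᴴ := by
          rw [Matrix.mul_nonsing_inv _ hdet, Matrix.nonsing_inv_mul _ hdetH,
            Matrix.one_mul, Matrix.one_mul]
  -- the zeroed-out R
  set R' : Matrix (Fin m) (Fin n) ℂ :=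
    Matrix.of (fun l j => if (l : ℕ) < k then 0 else R l j) with hR'
  have hmain : (1 - C * ((Cᴴ * C)⁻¹ * Cᴴ)) * (A * e.permMatrix ℂ) = Q * R' := by
    rw [hQR, hproj, Matrix.sub_mul, Matrix.one_mul]
    have hQ1Q : Q1 * (Q1ᴴ * Q) =
        Matrix.of (fun (i l : Fin m) => if (l : ℕ) < k then Q i l else 0) := by
      ext i l
      have hent : ∀ a : Fin k, (Q1ᴴ * Q) a l = if (Fin.castLE hkm a : Fin m) = l then 1 else 0 := by
        intro a
        have h := congrFun (congrFun hQ (Fin.castLE hkm a)) l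
        simp only [Matrix.mul_apply, Matrix.conjTranspose_apply, Matrix.one_apply] at h ⊢
        simp only [hQ1]
        rw [h]
      rw [Matrix.mul_apply]
      simp only [hent]
      by_cases hl : (l : ℕ) < k
      · rw [Finset.sum_eq_single (⟨(l : ℕ), hl⟩ : Fin k)]
        · simp [hQ1, Fin.ext_iff, hl]
        · intro b _ hb
          have hne : ¬ (Fin.castLE hkm b : Fin m) = l := fun hcontra =>
            hb (Fin.ext (by simpa [Fin.ext_iff] using hcontra))
          simp [hne]
        · simp
      · rw [Finset.sum_eq_zero, Matrix.of_apply, if_neg hl]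
        intro b _
        have : ¬ (Fin.castLE hkm b : Fin m) = l := by
          intro hcontra
          apply hl
          rw [← hcontra]
          exact b.isLt
        simp [this]
    have : Q1 * Q1ᴴ * (Q * R) = Q * Matrix.of (fun (l : Fin m) (j : Fin n) => if (l : ℕ) < k then R l j else 0) := by
      rw [← Matrix.mul_assoc, Matrix.mul_assoc Q1, hQ1Q]
      ext i j
      simp only [Matrix.mul_apply, Matrix.of_apply]
      refine Finset.sum_congr rfl fun l _ => ?_
      by_cases hl : (l : ℕ) < k <;> simp [hl]
    rw [this]
    ext i j
    simp only [Matrix.sub_apply, Matrix.mul_apply, Matrix.of_apply, hR',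
      ← Finset.sum_sub_distrib]
    refine Finset.sum_congr rfl fun l _ => ?_
    by_cases hl : (l : ℕ) < k <;> simp [hl]
  -- Frobenius norm computations
  have hperm : frobSq ((1 - C * ((Cᴴ * C)⁻¹ * Cᴴ)) * A) = frobSq (Q * R') := by
    rw [← hmain, ← Matrix.mul_assoc (1 - C * ((Cᴴ * C)⁻¹ * Cᴴ)) A,
      PEquiv.mul_toMatrix_toPEquiv, frobSq_submatrix_col]
  have hR'22 : frobSq R' = frobSq R22 := by
    have hm : k + (m - k) = m := by omega
    have hn : k + (n - k) = n := by omega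
    set em : Fin k ⊕ Fin (m - k) ≃ Fin m := finSumFinEquiv.trans (finCongr hm) with hem
    set en : Fin k ⊕ Fin (n - k) ≃ Fin n := finSumFinEquiv.trans (finCongr hn) with hen
    have hvem1 : ∀ a : Fin k, ((em (Sum.inl a) : Fin m) : ℕ) = (a : ℕ) := by
      intro a; simp [hem]
    have hvem2 : ∀ b : Fin (m - k), ((em (Sum.inr b) : Fin m) : ℕ) = k + (b : ℕ) := by
      intro b; simp [hem]
    have hven1 : ∀ c : Fin k, ((en (Sum.inl c) : Fin n) : ℕ) = (c : ℕ) := by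
      intro c; simp [hen]
    have hven2 : ∀ c : Fin (n - k), ((en (Sum.inr c) : Fin n) : ℕ) = k + (c : ℕ) := by
      intro c; simp [hen]
    unfold frobSq
    rw [← Equiv.sum_comp em (fun l => ∑ j, ‖R' l j‖ ^ 2), Fintype.sum_sum_type]
    have h1 : (∑ a : Fin k, ∑ j, ‖R' (em (Sum.inl a)) j‖ ^ 2) = 0 := by
      refine Finset.sum_eq_zero fun a _ => Finset.sum_eq_zero fun j _ => ?_
      have : R' (em (Sum.inl a)) j = 0 := by
        simp only [hR', Matrix.of_apply, hvem1 a]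
        rw [if_pos a.isLt]
      rw [this]; simp
    have h2 : ∀ b : Fin (m - k),
        (∑ j, ‖R' (em (Sum.inr b)) j‖ ^ 2) = ∑ c, ‖R22 b c‖ ^ 2 := by
      intro b
      rw [← Equiv.sum_comp en (fun j => ‖R' (em (Sum.inr b)) j‖ ^ 2), Fintype.sum_sum_type]
      have hnolt : ¬ ((em (Sum.inr b) : Fin m) : ℕ) < k := by rw [hvem2 b]; omega
      have hz : (∑ c : Fin k, ‖R' (em (Sum.inr b)) (en (Sum.inl c))‖ ^ 2) = 0 := by
        refine Finset.sum_eq_zero fun c _ => ?_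
        have : R' (em (Sum.inr b)) (en (Sum.inl c)) = 0 := by
          simp only [hR', Matrix.of_apply]
          rw [if_neg hnolt]
          exact hR _ _ (by rw [hven1 c, hvem2 b]; omega)
        rw [this]; simp
      have heq : (∑ c : Fin (n - k), ‖R' (em (Sum.inr b)) (en (Sum.inr c))‖ ^ 2)
          = ∑ c, ‖R22 b c‖ ^ 2 := by
        refine Finset.sum_congr rfl fun c _ => ?_
        have h3 : R' (em (Sum.inr b)) (en (Sum.inr c)) = R22 b c := by
          simp only [hR', Matrix.of_apply]
          rw [if_neg hnolt, hR22 b c,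
            show em (Sum.inr b) = (⟨k + (b : ℕ), by omega⟩ : Fin m) from Fin.ext (hvem2 b),
            show en (Sum.inr c) = (⟨k + (c : ℕ), by omega⟩ : Fin n) from Fin.ext (hven2 c)]
        rw [h3]
      rw [hz, heq, zero_add]
    rw [h1, zero_add]
    exact Finset.sum_congr rfl fun b _ => h2 b
  have : frobSq ((1 - C * ((Cᴴ * C)⁻¹ * Cᴴ)) * A) = frobSq R22 := by
    rw [hperm, frobSq_unitary_left Q hQ, hR'22]
  unfold frobNorm
  rw [this]
end

section
/- Let $A \in \mathbb{C}^{m\times n}$, let $C \in \mathbb{C}^{m\times k}$ have full column rank (i.e. $C^* C$ invertible) with $C^+ := (C^* C)^{-1} C^*$, and let $V \in \mathbb{C}^{n\times r}$ have orthonormal columns, $V^* V = I_r$. Then $\|A - C C^+ A V V^*\|_F^2 \le \|(I_m - C C^+) A\|_F^2 + \|A (I_n - V V^*)\|_F^2$. -/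
open scoped BigOperators
open Matrix

lemma frobSq_eq_trace {m n : Type*} [Fintype m] [Fintype n] (M : Matrix m n ℂ) :
    frobSq M = (Matrix.trace (Mᴴ * M)).re := by
  unfold frobSq
  rw [Matrix.trace, Finset.sum_comm]
  simp only [Matrix.diag_apply, Matrix.mul_apply, Matrix.conjTranspose_apply]
  rw [Complex.re_sum]
  refine Finset.sum_congr rfl fun i _ => ?_
  rw [Complex.re_sum]
  refine Finset.sum_congr rfl fun j _ => ?_
  rw [Complex.star_def, Complex.conj_mul']
  simp [Complex.sq_norm, Complex.normSq_eq_norm_sq, sq]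

lemma frobSq_add_of_orth {m n : Type*} [Fintype m] [Fintype n]
    (X Y : Matrix m n ℂ) (h : X * Yᴴ = 0) :
    frobSq (X + Y) = frobSq X + frobSq Y := by
  have h1 : Matrix.trace (Xᴴ * Y) = 0 := by
    rw [Matrix.trace_mul_comm]
    have : Y * Xᴴ = (X * Yᴴ)ᴴ := by simp
    rw [this, h]
    simp
  have h2 : Matrix.trace (Yᴴ * X) = 0 := by
    rw [Matrix.trace_mul_comm, h, Matrix.trace_zero]
  rw [frobSq_eq_trace, frobSq_eq_trace, frobSq_eq_trace]
  have : (X + Y)ᴴ * (X + Y) = Xᴴ * X + (Xᴴ * Y + (Yᴴ * X + Yᴴ * Y)) := by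
    rw [Matrix.conjTranspose_add, Matrix.add_mul, Matrix.mul_add, Matrix.mul_add]
    abel
  rw [this]
  simp [Matrix.trace_add, h1, h2]

lemma frobSq_mul_proj_le {m n : Type*} [Fintype m] [Fintype n] [DecidableEq n]
    (Q : Matrix n n ℂ) (hQh : Qᴴ = Q) (hQQ : Q * Q = Q)
    (A : Matrix m n ℂ) :
    frobSq (A * Q) ≤ frobSq A := by
  have hQ0 : Q * (1 - Q) = 0 := by rw [Matrix.mul_sub, Matrix.mul_one, hQQ, sub_self]
  have hsplit : A = A * Q + A * (1 - Q) := by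
    rw [Matrix.mul_sub, Matrix.mul_one]; abel
  have horth : (A * Q) * (A * (1 - Q))ᴴ = 0 := by
    rw [Matrix.conjTranspose_mul, Matrix.conjTranspose_sub, Matrix.conjTranspose_one, hQh]
    have : A * Q * ((1 - Q) * Aᴴ) = A * (Q * (1 - Q)) * Aᴴ := by
      simp only [Matrix.mul_assoc]
    rw [this, hQ0, Matrix.mul_zero, Matrix.zero_mul]
  calc frobSq (A * Q) ≤ frobSq (A * Q) + frobSq (A * (1 - Q)) := by
        linarith [frobSq_nonneg (A * (1 - Q))]
    _ = frobSq (A * Q + A * (1 - Q)) := (frobSq_add_of_orth _ _ horth).symm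
    _ = frobSq A := by rw [← hsplit]

/-- Error splitting for the matrix hybrid CUR-type approximation: with `C` of full
column rank, `C⁺ = (C^*C)⁻¹C^*`, and `V` with orthonormal columns,
`‖A - C C⁺ A V V^*‖_F² ≤ ‖(I - C C⁺) A‖_F² + ‖A (I - V V^*)‖_F²`. -/
theorem hybrid_error_splitting {m n k r : ℕ}
    (A : Matrix (Fin m) (Fin n) ℂ)
    (C : Matrix (Fin m) (Fin k) ℂ) (hC : IsUnit (Cᴴ * C))
    (V : Matrix (Fin n) (Fin r) ℂ) (hV : Vᴴ * V = 1) :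
    frobSq (A - C * ((Cᴴ * C)⁻¹ * Cᴴ) * A * (V * Vᴴ)) ≤
      frobSq ((1 - C * ((Cᴴ * C)⁻¹ * Cᴴ)) * A) + frobSq (A * (1 - V * Vᴴ)) := by
  set P : Matrix (Fin m) (Fin m) ℂ := C * ((Cᴴ * C)⁻¹ * Cᴴ) with hP
  set Q : Matrix (Fin n) (Fin n) ℂ := V * Vᴴ with hQ
  have hQh : Qᴴ = Q := by
    rw [hQ, Matrix.conjTranspose_mul, Matrix.conjTranspose_conjTranspose]
  have hQQ : Q * Q = Q := by
    have h1 : V * Vᴴ * (V * Vᴴ) = V * ((Vᴴ * V) * Vᴴ) := by simp only [Matrix.mul_assoc]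
    rw [hQ, h1, hV, Matrix.one_mul]
  have hQ0 : Q * (1 - Q) = 0 := by rw [Matrix.mul_sub, Matrix.mul_one, hQQ, sub_self]
  have hsplit : A - P * A * Q = (1 - P) * A * Q + A * (1 - Q) := by
    rw [Matrix.sub_mul, Matrix.sub_mul, Matrix.one_mul, Matrix.mul_sub, Matrix.mul_one]
    abel
  have horth : ((1 - P) * A * Q) * (A * (1 - Q))ᴴ = 0 := by
    rw [Matrix.conjTranspose_mul, Matrix.conjTranspose_sub, Matrix.conjTranspose_one, hQh]
    have h1 : (1 - P) * A * Q * ((1 - Q) * Aᴴ) = (1 - P) * (A * ((Q * (1 - Q)) * Aᴴ)) := by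
      simp only [Matrix.mul_assoc]
    rw [h1, hQ0, Matrix.zero_mul, Matrix.mul_zero, Matrix.mul_zero]
  rw [hsplit, frobSq_add_of_orth _ _ horth]
  have hle : frobSq ((1 - P) * A * Q) ≤ frobSq ((1 - P) * A) :=
    frobSq_mul_proj_le Q hQh hQQ ((1 - P) * A)
  linarith
end
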